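/- Assume Condition (D) and consider the coupling construction. Then for all (x, x') ∈ X²: E_{x,x',0}[ Σ_{n=0}^{T_1} r(n) ] ≤ 1 + (r(1)/(ε_b φ(1))) · (V̄(x, x') − 1) · 1_{(x,x') ∉ C̄}, where V̄(x, x') = V(x) + V(x') − 1. -/

import Mathlib

set_option linter.unusedSectionVars false
set_option maxHeartbeats 1000000


open MeasureTheory ProbabilityTheory Filter Set

noncomputable def iterKernel {X : Type*} [MeasurableSpace X]
    (P : ℕ → Kernel X X) : ℕ → Kernel X X
  | 0 => Kernel.id
  | n + 1 => (P (n + 1)).comp (iterKernel P n)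

noncomputable def Hfun (φ : ℝ → ℝ) (t : ℝ) : ℝ := ∫ s in (1:ℝ)..t, (φ s)⁻¹

noncomputable def Hinv (φ : ℝ → ℝ) : ℝ → ℝ := Function.invFunOn (Hfun φ) (Set.Ici 1)

noncomputable def rate (φ : ℝ → ℝ) (εb : ℝ) (n : ℕ) : ℝ := φ (Hinv φ (εb * n)) / φ 1

noncomputable def deltaSeq (φ : ℝ → ℝ) (εb : ℝ) (k : ℕ) : ℝ := εb * deriv φ (Hinv φ (εb * k))

noncomputable def bbar (φ : ℝ → ℝ) (εb bV : ℝ) : ℝ := 2 * bV + εb * φ 1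

noncomputable def Mone (φ : ℝ → ℝ) (εb εν bV cV : ℝ) : ℝ :=
  rate φ εb 1 * (1 + 2 * rate φ εb 1 / (εb * φ 1) * ((bV + cV) / (1 - εν) - 1))

noncomputable def cstar (φ : ℝ → ℝ) (εb εν bV cV : ℝ) : ℝ :=
  ∑' j : ℕ, (1 - εν) ^ j * ∏ k ∈ Finset.Icc 1 j, (1 + deltaSeq φ εb k * Mone φ εb εν bV cV)

noncomputable def cconst (φ : ℝ → ℝ) (εb εν bV cV : ℝ) : ℝ :=
  2 / (εb * φ 1) * (2 + bbar φ εb bV / εν +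
    cstar φ εb εν bV cV * bbar φ εb bV * rate φ εb 1 * (1 + rate φ εb 1 / (εb * φ 1)))

noncomputable def Qmeas {X : Type*} [MeasurableSpace X]
    (P : ℕ → Kernel X X) (ν : ℕ → Measure X) (εν : ℝ) (k : ℕ) (x : X) : Measure X :=
  (ENNReal.ofReal (1 - εν))⁻¹ • (P k x - ENNReal.ofReal εν • ν k)

/-- Composition of the coupling kernels with target restricted to the taboo set
`E = (C̄)ᶜ × {0,1}`:  `tabooIter n (s₀, univ)` is the probability that the chain
started at `s₀` stays outside `C̄` at times `1, …, n`. -/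
noncomputable def tabooIter {S : Type*} [MeasurableSpace S]
    (Pbar : ℕ → Kernel S S) {E : Set S} (hE : MeasurableSet E) : ℕ → Kernel S S
  | 0 => Kernel.id
  | n + 1 => ((Pbar (n + 1)).restrict hE).comp (tabooIter Pbar hE n)



section Analytic

variable {φ : ℝ → ℝ}
variable (hφmono : MonotoneOn φ (Set.Ici 1))
variable (hφdiff : ∀ t, 1 ≤ t → DifferentiableAt ℝ φ t)
variable (hφpos : ∀ t, 1 ≤ t → 0 < φ t)

include hφmono hφdiff hφpos

lemma hφcont : ContinuousOn φ (Ici 1) :=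
  fun t ht => ((hφdiff t ht).continuousAt).continuousWithinAt

lemma hinv_cont : ContinuousOn (fun s => (φ s)⁻¹) (Ici 1) :=
  (hφcont hφmono hφdiff hφpos).inv₀ (fun t ht => (hφpos t ht).ne')

lemma hinv_intable {a b : ℝ} (ha : 1 ≤ a) (hab : a ≤ b) :
    IntervalIntegrable (fun s => (φ s)⁻¹) MeasureTheory.volume a b := by
  apply ContinuousOn.intervalIntegrable
  apply (hinv_cont hφmono hφdiff hφpos).mono
  rw [Set.uIcc_of_le hab]
  exact fun t ht => le_trans ha ht.1

lemma Hfun_one : Hfun φ 1 = 0 := intervalIntegral.integral_same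

lemma Hfun_sub {a b : ℝ} (ha : 1 ≤ a) (hab : a ≤ b) :
    Hfun φ b - Hfun φ a = ∫ s in a..b, (φ s)⁻¹ := by
  have h1 : IntervalIntegrable (fun s => (φ s)⁻¹) MeasureTheory.volume 1 a :=
    hinv_intable hφmono hφdiff hφpos le_rfl ha
  have h2 : IntervalIntegrable (fun s => (φ s)⁻¹) MeasureTheory.volume a b :=
    hinv_intable hφmono hφdiff hφpos ha hab
  have := intervalIntegral.integral_add_adjacent_intervals h1 h2
  unfold Hfun
  linarith [this]

lemma Hfun_sub_le {a b : ℝ} (ha : 1 ≤ a) (hab : a ≤ b) :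
    Hfun φ b - Hfun φ a ≤ (b - a) / φ a := by
  rw [Hfun_sub hφmono hφdiff hφpos ha hab]
  have : ∫ s in a..b, (φ a)⁻¹ = (b - a) * (φ a)⁻¹ := by
    simp [intervalIntegral.integral_const, smul_eq_mul]
  rw [div_eq_mul_inv, ← this]
  apply intervalIntegral.integral_mono_on hab (hinv_intable hφmono hφdiff hφpos ha hab)
    (intervalIntegrable_const)
  intro t ht
  exact inv_anti₀ (hφpos a ha) (hφmono ha (ha.trans ht.1) ht.1)

lemma le_Hfun_sub {a b : ℝ} (ha : 1 ≤ a) (hab : a ≤ b) :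
    (b - a) / φ b ≤ Hfun φ b - Hfun φ a := by
  rw [Hfun_sub hφmono hφdiff hφpos ha hab]
  have hb : 1 ≤ b := le_trans ha hab
  have : ∫ s in a..b, (φ b)⁻¹ = (b - a) * (φ b)⁻¹ := by
    simp [intervalIntegral.integral_const, smul_eq_mul]
  rw [div_eq_mul_inv, ← this]
  apply intervalIntegral.integral_mono_on hab intervalIntegrable_const
    (hinv_intable hφmono hφdiff hφpos ha hab)
  intro t ht
  exact inv_anti₀ (hφpos t (le_trans ha ht.1)) (hφmono (le_trans ha ht.1) hb ht.2)

lemma Hfun_strictMonoOn : StrictMonoOn (Hfun φ) (Ici 1) := by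
  intro a ha b hb hab
  have h := le_Hfun_sub hφmono hφdiff hφpos ha hab.le
  have : 0 < (b - a) / φ b := div_pos (by linarith) (hφpos b hb)
  linarith

lemma Hfun_monotoneOn : MonotoneOn (Hfun φ) (Ici 1) :=
  (Hfun_strictMonoOn hφmono hφdiff hφpos).monotoneOn

lemma Hfun_nonneg {t : ℝ} (ht : 1 ≤ t) : 0 ≤ Hfun φ t := by
  have := Hfun_monotoneOn hφmono hφdiff hφpos (Set.self_mem_Ici) ht ht
  rw [Hfun_one hφmono hφdiff hφpos] at this; exact this

lemma Hfun_continuousOn : ContinuousOn (Hfun φ) (Ici 1) := by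
  have hφ1 : 0 < φ 1 := hφpos 1 le_rfl
  have key : ∀ a b : ℝ, 1 ≤ a → a ≤ b → Hfun φ b - Hfun φ a ≤ (b - a) / φ 1 := by
    intro a b ha hab
    refine le_trans (Hfun_sub_le hφmono hφdiff hφpos ha hab) ?_
    exact div_le_div_of_nonneg_left (by linarith) hφ1 (hφmono self_mem_Ici ha ha)
  have habs : ∀ t ∈ Ici (1:ℝ), ∀ u ∈ Ici (1:ℝ),
      |Hfun φ u - Hfun φ t| ≤ |u - t| / φ 1 := by
    intro t ht u hu
    rcases le_total u t with h | h
    · have h2 := key u t hu h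
      have h3 := Hfun_monotoneOn hφmono hφdiff hφpos hu ht h
      rw [abs_sub_comm, abs_of_nonneg (by linarith : (0:ℝ) ≤ Hfun φ t - Hfun φ u),
        abs_sub_comm, abs_of_nonneg (by linarith : (0:ℝ) ≤ t - u)]
      exact h2
    · have h2 := key t u ht h
      have h3 := Hfun_monotoneOn hφmono hφdiff hφpos ht hu h
      rw [abs_of_nonneg (by linarith : (0:ℝ) ≤ Hfun φ u - Hfun φ t),
        abs_of_nonneg (by linarith : (0:ℝ) ≤ u - t)]
      exact h2
  intro t ht
  rw [Metric.continuousWithinAt_iff]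
  intro ε hε
  refine ⟨ε * φ 1, mul_pos hε hφ1, fun {u} hu hdu => ?_⟩
  rw [Real.dist_eq] at hdu ⊢
  calc |Hfun φ u - Hfun φ t| ≤ |u - t| / φ 1 := habs t ht u hu
    _ < ε := by rw [div_lt_iff₀ hφ1]; linarith

lemma Hfun_unbounded (hφderiv0 : Tendsto (deriv φ) atTop (nhds 0)) :
    ∀ M : ℝ, ∃ t, 1 ≤ t ∧ M ≤ Hfun φ t := by
  intro M
  -- find a point beyond which the derivative is at most 1
  have h1 : ∀ᶠ s in atTop, deriv φ s < 1 := by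
    have := hφderiv0.eventually (eventually_lt_nhds (by norm_num : (0:ℝ) < 1))
    exact this
  obtain ⟨s₀, hs₀⟩ := h1.exists_forall_of_atTop
  set a : ℝ := max s₀ 1 with ha_def
  have ha1 : (1:ℝ) ≤ a := le_max_right _ _
  set c : ℝ := φ a with hc_def
  have hc : 0 < c := hφpos a ha1
  -- linear growth bound for φ above a
  have hlin : ∀ t, a ≤ t → φ t ≤ c + (t - a) := by
    intro t hta
    have hmonF : MonotoneOn (fun u => c + (u - a) - φ u) (Ici a) := by
      apply monotoneOn_of_deriv_nonneg (convex_Ici a)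
      · apply ContinuousOn.sub (by fun_prop)
        exact (hφcont hφmono hφdiff hφpos).mono (fun u hu => le_trans ha1 hu)
      · intro u hu
        rw [interior_Ici] at hu
        have hu1 : 1 ≤ u := le_trans ha1 hu.le
        exact ((((hasDerivAt_id u).sub_const a).const_add c).sub
          (hφdiff u hu1).hasDerivAt).differentiableAt.differentiableWithinAt
      · intro u hu
        rw [interior_Ici] at hu
        have hu1 : 1 ≤ u := le_trans ha1 hu.le
        have hd : HasDerivAt (fun u => c + (u - a) - φ u) (1 - deriv φ u) u :=
          ((((hasDerivAt_id u).sub_const a).const_add c).sub (hφdiff u hu1).hasDerivAt)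
        rw [hd.deriv]
        have : deriv φ u < 1 := hs₀ u (le_trans (le_max_left _ _) hu.le)
        linarith
    have := hmonF (self_mem_Ici) hta hta
    simp only at this
    linarith
  -- choose T large enough
  set T : ℝ := a + c * Real.exp M with hT_def
  have hTa : a ≤ T := by
    have := mul_pos hc (Real.exp_pos M); linarith
  refine ⟨T, le_trans ha1 hTa, ?_⟩
  -- compare integrals
  have hint2 : ∀ s ∈ Icc a T, HasDerivAt (fun u => Real.log (c + (u - a))) ((c + (s - a))⁻¹) s := by
    intro s hs
    have hpos : 0 < c + (s - a) := by have := hs.1; linarith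
    have hinner : HasDerivAt (fun u : ℝ => c + (u - a)) 1 s := by
      simpa using ((hasDerivAt_id s).sub_const a).const_add c
    have := (Real.hasDerivAt_log hpos.ne').comp s hinner
    rw [mul_one] at this; exact this
  have hcont2 : ContinuousOn (fun s => (c + (s - a))⁻¹) (Icc a T) := by
    apply ContinuousOn.inv₀ (by fun_prop)
    intro s hs
    have h1 := hs.1
    have : 0 < c + (s - a) := by linarith
    exact this.ne'
  have hii2 : IntervalIntegrable (fun s => (c + (s - a))⁻¹) MeasureTheory.volume a T := by
    apply hcont2.intervalIntegrable_of_Icc hTa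
  have heq : ∫ s in a..T, (c + (s - a))⁻¹ = Real.log (c + (T - a)) - Real.log (c + (a - a)) := by
    have h := intervalIntegral.integral_eq_sub_of_hasDerivAt
      (f := fun u => Real.log (c + (u - a))) (f' := fun s => (c + (s - a))⁻¹)
      (fun s hs => hint2 s (by rwa [uIcc_of_le hTa] at hs)) hii2
    simpa using h
  have hmono2 : ∫ s in a..T, (c + (s - a))⁻¹ ≤ ∫ s in a..T, (φ s)⁻¹ := by
    apply intervalIntegral.integral_mono_on hTa hii2 (hinv_intable hφmono hφdiff hφpos ha1 hTa)
    intro s hs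
    have hs1 : 1 ≤ s := le_trans ha1 hs.1
    have hpos : 0 < c + (s - a) := by have := hs.1; linarith
    exact inv_anti₀ (hφpos s hs1) (hlin s hs.1)
  have hHT : Hfun φ T = Hfun φ a + ∫ s in a..T, (φ s)⁻¹ := by
    have := Hfun_sub hφmono hφdiff hφpos ha1 hTa; linarith
  have hHa : 0 ≤ Hfun φ a := Hfun_nonneg hφmono hφdiff hφpos ha1
  have hlog : M ≤ Real.log (c + (T - a)) - Real.log (c + (a - a)) := by
    simp only [sub_self, add_zero]
    have h1 : c + (T - a) = c + c * Real.exp M := by rw [hT_def]; ring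
    rw [h1]
    have h2 : c * Real.exp M ≤ c + c * Real.exp M := by linarith
    calc M = Real.log (c * Real.exp M) - Real.log c := by
            rw [Real.log_mul hc.ne' (Real.exp_pos M).ne', Real.log_exp]; ring
      _ ≤ Real.log (c + c * Real.exp M) - Real.log c := by
            have := Real.log_le_log (by positivity) h2; linarith
  linarith [hmono2, heq ▸ hlog]

lemma Hfun_surj (hφderiv0 : Tendsto (deriv φ) atTop (nhds 0)) {y : ℝ} (hy : 0 ≤ y) :
    ∃ t, 1 ≤ t ∧ Hfun φ t = y := by
  obtain ⟨T, hT1, hTy⟩ := Hfun_unbounded hφmono hφdiff hφpos hφderiv0 y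
  have hcont : ContinuousOn (Hfun φ) (Icc 1 T) :=
    (Hfun_continuousOn hφmono hφdiff hφpos).mono (Icc_subset_Ici_self)
  have : y ∈ Icc (Hfun φ 1) (Hfun φ T) := by
    rw [Hfun_one hφmono hφdiff hφpos]; exact ⟨hy, hTy⟩
  obtain ⟨t, ht, hteq⟩ := intermediate_value_Icc hT1 hcont this
  exact ⟨t, ht.1, hteq⟩

section HinvSec
variable (hφderiv0 : Tendsto (deriv φ) atTop (nhds 0))
include hφderiv0

lemma Hinv_mem {y : ℝ} (hy : 0 ≤ y) : 1 ≤ Hinv φ y :=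
  Function.invFunOn_mem (by
    obtain ⟨t, ht, hteq⟩ := Hfun_surj hφmono hφdiff hφpos hφderiv0 hy
    exact ⟨t, ht, hteq⟩)

lemma Hfun_Hinv {y : ℝ} (hy : 0 ≤ y) : Hfun φ (Hinv φ y) = y :=
  Function.invFunOn_eq (by
    obtain ⟨t, ht, hteq⟩ := Hfun_surj hφmono hφdiff hφpos hφderiv0 hy
    exact ⟨t, ht, hteq⟩)

lemma Hinv_Hfun {t : ℝ} (ht : 1 ≤ t) : Hinv φ (Hfun φ t) = t := by
  have hinj : Set.InjOn (Hfun φ) (Ici 1) := (Hfun_strictMonoOn hφmono hφdiff hφpos).injOn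
  exact hinj.leftInvOn_invFunOn ht

lemma Hinv_le_iff {y t : ℝ} (hy : 0 ≤ y) (ht : 1 ≤ t) :
    Hinv φ y ≤ t ↔ y ≤ Hfun φ t := by
  constructor
  · intro h
    have := Hfun_monotoneOn hφmono hφdiff hφpos (Hinv_mem hφmono hφdiff hφpos hφderiv0 hy) ht h
    rwa [Hfun_Hinv hφmono hφdiff hφpos hφderiv0 hy] at this
  · intro h
    by_contra hlt
    push_neg at hlt
    have := Hfun_strictMonoOn hφmono hφdiff hφpos ht
      (Hinv_mem hφmono hφdiff hφpos hφderiv0 hy) hlt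
    rw [Hfun_Hinv hφmono hφdiff hφpos hφderiv0 hy] at this
    linarith

lemma le_Hinv_iff {y t : ℝ} (hy : 0 ≤ y) (ht : 1 ≤ t) :
    t ≤ Hinv φ y ↔ Hfun φ t ≤ y := by
  constructor
  · intro h
    have := Hfun_monotoneOn hφmono hφdiff hφpos ht
      (Hinv_mem hφmono hφdiff hφpos hφderiv0 hy) h
    rwa [Hfun_Hinv hφmono hφdiff hφpos hφderiv0 hy] at this
  · intro h
    by_contra hlt
    push_neg at hlt
    have := Hfun_strictMonoOn hφmono hφdiff hφpos
      (Hinv_mem hφmono hφdiff hφpos hφderiv0 hy) ht hlt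
    rw [Hfun_Hinv hφmono hφdiff hφpos hφderiv0 hy] at this
    linarith

lemma Hinv_mono {y₁ y₂ : ℝ} (hy₁ : 0 ≤ y₁) (h : y₁ ≤ y₂) :
    Hinv φ y₁ ≤ Hinv φ y₂ := by
  rw [Hinv_le_iff hφmono hφdiff hφpos hφderiv0 hy₁
    (Hinv_mem hφmono hφdiff hφpos hφderiv0 (hy₁.trans h))]
  rw [Hfun_Hinv hφmono hφdiff hφpos hφderiv0 (hy₁.trans h)]
  exact h

lemma Hinv_zero : Hinv φ 0 = 1 := by
  have := Hinv_Hfun hφmono hφdiff hφpos hφderiv0 (le_refl (1:ℝ))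
  rwa [Hfun_one hφmono hφdiff hφpos] at this

-- G3 : increment of Hinv
lemma Hinv_incr {c ε : ℝ} (hc : 0 ≤ c) (hε : 0 ≤ ε) :
    Hinv φ c + ε * φ (Hinv φ c) ≤ Hinv φ (c + ε) := by
  set A := Hinv φ c with hA
  have hA1 : 1 ≤ A := Hinv_mem hφmono hφdiff hφpos hφderiv0 hc
  have hφA : 0 < φ A := hφpos A hA1
  set B := A + ε * φ A with hB
  have hAB : A ≤ B := by nlinarith
  have hB1 : 1 ≤ B := hA1.trans hAB
  rw [le_Hinv_iff hφmono hφdiff hφpos hφderiv0 (by linarith) hB1]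
  have h1 : Hfun φ B - Hfun φ A ≤ (B - A) / φ A :=
    Hfun_sub_le hφmono hφdiff hφpos hA1 hAB
  have h2 : (B - A) / φ A = ε := by rw [hB]; field_simp; ring
  have h3 : Hfun φ A = c := Hfun_Hinv hφmono hφdiff hφpos hφderiv0 hc
  linarith

end HinvSec

section ConcSec
variable (hφconc : ConcaveOn ℝ (Set.Ici 1) φ)
include hφconc

lemma hφderiv_anti : AntitoneOn (deriv φ) (Ici 1) :=
  hφconc.antitoneOn_deriv (fun t ht => hφdiff t ht)

-- tangent line inequality
lemma φ_tangent {v w : ℝ} (hv : 1 ≤ v) (hw : 1 ≤ w) :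
    φ v ≤ φ w + deriv φ w * (v - w) := by
  rcases lt_trichotomy v w with h | h | h
  · have := hφconc.deriv_le_slope (x := v) (y := w) hv hw h (hφdiff w hw)
    rw [slope_def_field] at this
    have h2 := (le_div_iff₀ (by linarith : (0:ℝ) < w - v)).mp this
    nlinarith [h2]
  · subst h; simp
  · have := hφconc.slope_le_deriv (x := w) (y := v) hw hv h (hφdiff w hw)
    rw [slope_def_field] at this
    rw [div_le_iff₀ (by linarith : (0:ℝ) < v - w)] at this
    nlinarith [this]

-- subadditivity-type chord inequality : φ(a+b-1) ≤ φ a + φ b - φ 1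
lemma φ_chord {a b : ℝ} (ha : 1 ≤ a) (hb : 1 ≤ b) :
    φ (a + b - 1) ≤ φ a + φ b - φ 1 := by
  -- F t := φ (t + (b-1)) - φ t is antitone on Ici 1
  have hmonF : AntitoneOn (fun t => φ (t + (b - 1)) - φ t) (Ici 1) := by
    apply antitoneOn_of_deriv_nonpos (convex_Ici 1)
    · apply ContinuousOn.sub
      · have : ContinuousOn (fun t : ℝ => t + (b-1)) (Ici 1) := by fun_prop
        apply ContinuousOn.comp (hφcont hφmono hφdiff hφpos) this
        intro t ht; exact by simp only [mem_Ici] at *; linarith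
      · exact hφcont hφmono hφdiff hφpos
    · intro t ht
      rw [interior_Ici] at ht
      have ht1 : 1 ≤ t := ht.le
      have hd : HasDerivAt (fun t => φ (t + (b - 1)) - φ t)
          (deriv φ (t + (b-1)) - deriv φ t) t := by
        have h1 : HasDerivAt (fun t : ℝ => t + (b-1)) 1 t := by
          simpa using (hasDerivAt_id t).add_const (b-1)
        have h2 := ((hφdiff (t + (b-1)) (by linarith)).hasDerivAt).comp t h1
        have h3 := h2.sub (hφdiff t ht1).hasDerivAt
        rw [mul_one] at h3; exact h3
      exact hd.differentiableAt.differentiableWithinAt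
    · intro t ht
      rw [interior_Ici] at ht
      have ht1 : 1 ≤ t := ht.le
      have hd : HasDerivAt (fun t => φ (t + (b - 1)) - φ t)
          (deriv φ (t + (b-1)) - deriv φ t) t := by
        have h1 : HasDerivAt (fun t : ℝ => t + (b-1)) 1 t := by
          simpa using (hasDerivAt_id t).add_const (b-1)
        have h2 := ((hφdiff (t + (b-1)) (by linarith)).hasDerivAt).comp t h1
        have h3 := h2.sub (hφdiff t ht1).hasDerivAt
        rw [mul_one] at h3; exact h3
      rw [hd.deriv]
      have := hφderiv_anti hφmono hφdiff hφpos hφconc ht1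
        (by simp only [mem_Ici]; linarith : t + (b-1) ∈ Ici (1:ℝ)) (by linarith)
      linarith
  have := hmonF (self_mem_Ici) ha ha
  simp only at this
  have heq : a + (b - 1) = a + b - 1 := by ring
  have heq2 : (1:ℝ) + (b - 1) = b := by ring
  rw [heq, heq2] at this
  linarith

-- FTC: derivative of Hfun
omit hφconc in
lemma Hfun_hasDerivAt {t : ℝ} (ht : 1 < t) : HasDerivAt (Hfun φ) ((φ t)⁻¹) t := by
  apply intervalIntegral.integral_hasDerivAt_right
    (hinv_intable hφmono hφdiff hφpos le_rfl ht.le)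
  · exact ((hinv_cont hφmono hφdiff hφpos).mono (Ioi_subset_Ici le_rfl)).stronglyMeasurableAtFilter
      isOpen_Ioi t ht
  · exact ((hinv_cont hφmono hφdiff hφpos)).continuousAt (Ici_mem_nhds ht)

section Gsec
variable (hφderiv0 : Tendsto (deriv φ) atTop (nhds 0))
include hφderiv0

omit hφconc in
lemma Hinv_pos_gt_one {y : ℝ} (hy : 0 < y) : 1 < Hinv φ y := by
  have h1 := Hinv_mem hφmono hφdiff hφpos hφderiv0 hy.le
  rcases eq_or_lt_of_le h1 with h | h
  · exfalso
    have := Hfun_Hinv hφmono hφdiff hφpos hφderiv0 hy.le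
    rw [← h, Hfun_one hφmono hφdiff hφpos] at this
    linarith
  · exact h

omit hφconc in
lemma Hinv_continuousAt {y : ℝ} (hy : 0 < y) : ContinuousAt (Hinv φ) y := by
  set t := Hinv φ y with ht_def
  have ht1 : 1 < t := Hinv_pos_gt_one hφmono hφdiff hφpos hφderiv0 hy
  rw [Metric.continuousAt_iff]
  intro ε hε
  set ε' : ℝ := min (ε/2) ((t-1)/2) with hε'_def
  have hε'pos : 0 < ε' := by
    apply lt_min (by linarith); linarith
  have hε't : 1 ≤ t - ε' := by
    have := min_le_right (ε/2) ((t-1)/2); simp only [← hε'_def] at this; linarith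
  have hlow : Hfun φ (t - ε') < y := by
    have := Hfun_strictMonoOn hφmono hφdiff hφpos (mem_Ici.mpr hε't)
      (mem_Ici.mpr (by linarith : (1:ℝ) ≤ t)) (by linarith : t - ε' < t)
    rwa [Hfun_Hinv hφmono hφdiff hφpos hφderiv0 hy.le] at this
  have hhigh : y < Hfun φ (t + ε') := by
    have := Hfun_strictMonoOn hφmono hφdiff hφpos (mem_Ici.mpr (by linarith : (1:ℝ) ≤ t))
      (mem_Ici.mpr (by linarith : (1:ℝ) ≤ t + ε')) (by linarith)
    rwa [Hfun_Hinv hφmono hφdiff hφpos hφderiv0 hy.le] at this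
  set δ : ℝ := min (y - Hfun φ (t - ε')) (Hfun φ (t + ε') - y) with hδ_def
  have hδpos : 0 < δ := lt_min (by linarith) (by linarith)
  refine ⟨δ, hδpos, fun {y'} hdy' => ?_⟩
  rw [Real.dist_eq] at hdy' ⊢
  have h1 : Hfun φ (t - ε') < y' := by
    have h := abs_lt.mp hdy'
    have := min_le_left (y - Hfun φ (t - ε')) (Hfun φ (t + ε') - y)
    simp only [← hδ_def] at this
    linarith
  have h2 : y' < Hfun φ (t + ε') := by
    have h := abs_lt.mp hdy'
    have := min_le_right (y - Hfun φ (t - ε')) (Hfun φ (t + ε') - y)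
    simp only [← hδ_def] at this
    linarith
  have hy'0 : 0 ≤ y' := le_trans (Hfun_nonneg hφmono hφdiff hφpos hε't) h1.le
  have hA : Hinv φ y' ≤ t + ε' := by
    rw [Hinv_le_iff hφmono hφdiff hφpos hφderiv0 hy'0 (by linarith)]
    exact h2.le
  have hB : t - ε' ≤ Hinv φ y' := by
    rw [le_Hinv_iff hφmono hφdiff hφpos hφderiv0 hy'0 hε't]
    exact h1.le
  have : |Hinv φ y' - t| ≤ ε' := by
    rw [abs_le]; constructor <;> linarith
  have hε'le : ε' ≤ ε/2 := min_le_left _ _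
  linarith [this]

omit hφconc in
lemma Hinv_hasDerivAt {y : ℝ} (hy : 0 < y) :
    HasDerivAt (Hinv φ) (φ (Hinv φ y)) y := by
  have ht1 : 1 < Hinv φ y := Hinv_pos_gt_one hφmono hφdiff hφpos hφderiv0 hy
  have h := HasDerivAt.of_local_left_inverse
    (Hinv_continuousAt hφmono hφdiff hφpos hφderiv0 hy)
    (Hfun_hasDerivAt hφmono hφdiff hφpos ht1)
    (inv_ne_zero (hφpos (Hinv φ y) ht1.le).ne')
    ?_
  · rwa [inv_inv] at h
  · filter_upwards [Ioi_mem_nhds hy] with z hz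
    exact Hfun_Hinv hφmono hφdiff hφpos hφderiv0 (le_of_lt hz)

omit hφconc in
lemma G_hasDerivAt {c v : ℝ} (hc : 0 ≤ c) (hv : 1 < v) :
    HasDerivAt (fun u => Hinv φ (c + Hfun φ u))
      (φ (Hinv φ (c + Hfun φ v)) * (φ v)⁻¹) v := by
  have hHv : 0 < Hfun φ v := by
    have := Hfun_strictMonoOn hφmono hφdiff hφpos (self_mem_Ici) (mem_Ici.mpr (by linarith)) hv
    rwa [Hfun_one hφmono hφdiff hφpos] at this
  have hy : 0 < c + Hfun φ v := by linarith
  have hinner : HasDerivAt (fun u => c + Hfun φ u) ((φ v)⁻¹) v :=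
    (Hfun_hasDerivAt hφmono hφdiff hφpos hv).const_add c
  have houter := Hinv_hasDerivAt hφmono hφdiff hφpos hφderiv0 hy
  exact houter.comp v hinner

omit hφconc in
lemma G_ge {c v : ℝ} (hc : 0 ≤ c) (hv : 1 ≤ v) :
    v ≤ Hinv φ (c + Hfun φ v) := by
  rw [le_Hinv_iff hφmono hφdiff hφpos hφderiv0
    (by linarith [Hfun_nonneg hφmono hφdiff hφpos hv]) hv]
  linarith

omit hφconc in
lemma G_ge_one {c v : ℝ} (hc : 0 ≤ c) (hv : 1 ≤ v) :
    1 ≤ Hinv φ (c + Hfun φ v) :=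
  le_trans hv (G_ge hφmono hφdiff hφpos hφderiv0 hc hv)

omit hφconc in
lemma G_mono_v {c v₁ v₂ : ℝ} (hc : 0 ≤ c) (hv₁ : 1 ≤ v₁) (h : v₁ ≤ v₂) :
    Hinv φ (c + Hfun φ v₁) ≤ Hinv φ (c + Hfun φ v₂) := by
  apply Hinv_mono hφmono hφdiff hφpos hφderiv0
    (by linarith [Hfun_nonneg hφmono hφdiff hφpos hv₁])
  have := Hfun_monotoneOn hφmono hφdiff hφpos hv₁ (hv₁.trans h) h
  linarith

-- the drift shift lemma
omit hφconc in
lemma G_shift {c εb v : ℝ} (hεb : 0 < εb) (hc : εb ≤ c) (hv : 1 ≤ v)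
    (hv2 : 1 ≤ v - εb * φ v) :
    Hinv φ (c + Hfun φ (v - εb * φ v)) ≤ Hinv φ ((c - εb) + Hfun φ v) := by
  have hkey : Hfun φ (v - εb * φ v) ≤ Hfun φ v - εb := by
    have h := le_Hfun_sub hφmono hφdiff hφpos hv2
      (by nlinarith [hφpos v hv, hεb.le] : v - εb * φ v ≤ v)
    have heq : (v - (v - εb * φ v)) / φ v = εb := by
      field_simp [(hφpos v hv).ne']
      ring
    rw [heq] at h
    linarith
  apply Hinv_mono hφmono hφdiff hφpos hφderiv0
    (by linarith [Hfun_nonneg hφmono hφdiff hφpos hv2])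
  linarith

-- G4 : affine bound on G
lemma G_affine_bound {c v : ℝ} (hc : 0 ≤ c) (hv : 1 ≤ v) :
    Hinv φ (c + Hfun φ v) ≤ Hinv φ c + (φ (Hinv φ c) / φ 1) * (v - 1) := by
  set A := Hinv φ c with hA_def
  have hA1 : 1 ≤ A := Hinv_mem hφmono hφdiff hφpos hφderiv0 hc
  have hφ1 : 0 < φ 1 := hφpos 1 le_rfl
  have hφA : 0 < φ A := hφpos A hA1
  set K : ℝ := φ A / φ 1 with hK_def
  have hK1 : 1 ≤ K := (one_le_div hφ1).mpr (hφmono self_mem_Ici (mem_Ici.mpr hA1) hA1)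
  have hR : ∀ u : ℝ, 1 ≤ u → u ≤ A + K * (u - 1) := by
    intro u hu; nlinarith
  have hR1 : ∀ u : ℝ, 1 ≤ u → 1 ≤ A + K * (u - 1) := by
    intro u hu; nlinarith
  have hRd : ∀ u : ℝ, HasDerivAt (fun u : ℝ => A + K * (u - 1)) K u := by
    intro u
    simpa using (((hasDerivAt_id u).sub_const 1).const_mul K).const_add A
  have hRcont : ContinuousOn (fun u : ℝ => A + K * (u - 1)) (Ici 1) := by fun_prop
  -- step (i): φ (R u) ≤ K * φ u on Ici 1
  have hstep1 : ∀ u : ℝ, 1 ≤ u → φ (A + K * (u - 1)) ≤ K * φ u := by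
    have hmonF : MonotoneOn (fun u => K * φ u - φ (A + K * (u - 1))) (Ici 1) := by
      apply monotoneOn_of_deriv_nonneg (convex_Ici 1)
      · apply ContinuousOn.sub
        · exact ContinuousOn.const_smul (hφcont hφmono hφdiff hφpos) K
        · apply ContinuousOn.comp (hφcont hφmono hφdiff hφpos) hRcont
          intro u hu; exact mem_Ici.mpr (hR1 u hu)
      · intro u hu
        rw [interior_Ici] at hu
        have hu1 : 1 ≤ u := hu.le
        have hd : HasDerivAt (fun u => K * φ u - φ (A + K * (u - 1)))
            (K * deriv φ u - deriv φ (A + K * (u - 1)) * K) u := by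
          exact (((hφdiff u hu1).hasDerivAt.const_mul K).sub
            (((hφdiff _ (hR1 u hu1)).hasDerivAt).comp u (hRd u)))
        exact hd.differentiableAt.differentiableWithinAt
      · intro u hu
        rw [interior_Ici] at hu
        have hu1 : 1 ≤ u := hu.le
        have hd : HasDerivAt (fun u => K * φ u - φ (A + K * (u - 1)))
            (K * deriv φ u - deriv φ (A + K * (u - 1)) * K) u := by
          exact (((hφdiff u hu1).hasDerivAt.const_mul K).sub
            (((hφdiff _ (hR1 u hu1)).hasDerivAt).comp u (hRd u)))
        rw [hd.deriv]
        have hanti := hφderiv_anti hφmono hφdiff hφpos hφconc (mem_Ici.mpr hu1)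
          (mem_Ici.mpr (hR1 u hu1)) (hR u hu1)
        nlinarith [hanti]
    intro u hu
    have h0 := hmonF self_mem_Ici (mem_Ici.mpr hu) hu
    simp only at h0
    have hsimp : A + K * ((1:ℝ) - 1) = A := by ring
    rw [hsimp] at h0
    have : K * φ 1 = φ A := by rw [hK_def]; field_simp
    linarith
  -- step (ii): D u := Hfun (R u) - Hfun u - c is monotone on Ici 1
  have hstep2 : MonotoneOn (fun u => Hfun φ (A + K * (u - 1)) - Hfun φ u - c) (Ici 1) := by
    apply monotoneOn_of_deriv_nonneg (convex_Ici 1)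
    · apply ContinuousOn.sub
      apply ContinuousOn.sub
      · apply ContinuousOn.comp (Hfun_continuousOn hφmono hφdiff hφpos) hRcont
        intro u hu; exact mem_Ici.mpr (hR1 u hu)
      · exact Hfun_continuousOn hφmono hφdiff hφpos
      · exact continuousOn_const
    · intro u hu
      rw [interior_Ici] at hu
      have hu1 : 1 < u := hu
      have hR1u : 1 < A + K * (u - 1) := by nlinarith
      have hd : HasDerivAt (fun u => Hfun φ (A + K * (u - 1)) - Hfun φ u - c)
          ((φ (A + K * (u - 1)))⁻¹ * K - (φ u)⁻¹) u := by
        exact (((Hfun_hasDerivAt hφmono hφdiff hφpos hR1u).comp u (hRd u)).sub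
          (Hfun_hasDerivAt hφmono hφdiff hφpos hu1)).sub_const c
      exact hd.differentiableAt.differentiableWithinAt
    · intro u hu
      rw [interior_Ici] at hu
      have hu1 : 1 < u := hu
      have hR1u : 1 < A + K * (u - 1) := by nlinarith
      have hd : HasDerivAt (fun u => Hfun φ (A + K * (u - 1)) - Hfun φ u - c)
          ((φ (A + K * (u - 1)))⁻¹ * K - (φ u)⁻¹) u := by
        exact (((Hfun_hasDerivAt hφmono hφdiff hφpos hR1u).comp u (hRd u)).sub
          (Hfun_hasDerivAt hφmono hφdiff hφpos hu1)).sub_const c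
      rw [hd.deriv]
      have h1 := hstep1 u hu1.le
      have hφu : 0 < φ u := hφpos u hu1.le
      have hφR : 0 < φ (A + K * (u - 1)) := hφpos _ hR1u.le
      rw [sub_nonneg, inv_eq_one_div, inv_eq_one_div, div_mul_eq_mul_div, one_mul,
        div_le_div_iff₀ hφu hφR]
      nlinarith
  -- conclude
  have h0 := hstep2 self_mem_Ici (mem_Ici.mpr hv) hv
  simp only at h0
  have hsimp : A + K * ((1:ℝ) - 1) = A := by ring
  rw [hsimp] at h0
  have hHA : Hfun φ A = c := Hfun_Hinv hφmono hφdiff hφpos hφderiv0 hc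
  rw [hHA, Hfun_one hφmono hφdiff hφpos] at h0
  -- h0 : c - 0 - c ≤ Hfun (A + K (v-1)) - Hfun v - c
  have hconc : c + Hfun φ v ≤ Hfun φ (A + K * (v - 1)) := by linarith
  have := (Hinv_le_iff hφmono hφdiff hφpos hφderiv0
    (by linarith [Hfun_nonneg hφmono hφdiff hφpos hv] : 0 ≤ c + Hfun φ v)
    (hR1 v hv)).mpr hconc
  exact this

lemma G_continuousOn {c : ℝ} (hc : 0 ≤ c) :
    ContinuousOn (fun u => Hinv φ (c + Hfun φ u)) (Ici 1) := by
  intro v hv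
  rcases eq_or_lt_of_le (mem_Ici.mp hv) with h | h
  · -- continuity at the left endpoint, by squeezing
    subst h
    have hup : ∀ u ∈ Ici (1:ℝ), Hinv φ (c + Hfun φ u) ≤ Hinv φ c +
        (φ (Hinv φ c) / φ 1) * (u - 1) :=
      fun u hu => G_affine_bound hφmono hφdiff hφpos hφconc hφderiv0 hc hu
    have hlo : ∀ u ∈ Ici (1:ℝ), Hinv φ c ≤ Hinv φ (c + Hfun φ u) := by
      intro u hu
      apply Hinv_mono hφmono hφdiff hφpos hφderiv0 hc
      linarith [Hfun_nonneg hφmono hφdiff hφpos (mem_Ici.mp hu)]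
    have hval : Hinv φ (c + Hfun φ 1) = Hinv φ c := by
      rw [Hfun_one hφmono hφdiff hφpos, add_zero]
    rw [ContinuousWithinAt]
    rw [hval]
    have hj : Tendsto (fun u : ℝ => Hinv φ c + (φ (Hinv φ c) / φ 1) * (u - 1))
        (nhdsWithin 1 (Ici 1)) (nhds (Hinv φ c)) := by
      have : Tendsto (fun u : ℝ => Hinv φ c + (φ (Hinv φ c) / φ 1) * (u - 1))
          (nhds 1) (nhds (Hinv φ c + (φ (Hinv φ c) / φ 1) * (1 - 1))) := by
        apply Continuous.tendsto; fun_prop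
      simp only [sub_self, mul_zero, add_zero] at this
      exact this.mono_left nhdsWithin_le_nhds
    apply tendsto_of_tendsto_of_tendsto_of_le_of_le' tendsto_const_nhds hj
    · filter_upwards [eventually_mem_nhdsWithin] with u hu
      exact hlo u hu
    · filter_upwards [eventually_mem_nhdsWithin] with u hu
      exact hup u hu
  · exact ((G_hasDerivAt hφmono hφdiff hφpos hφderiv0 hc h).continuousAt).continuousWithinAt

lemma G_concaveOn {c : ℝ} (hc : 0 ≤ c) :
    ConcaveOn ℝ (Ici 1) (fun u => Hinv φ (c + Hfun φ u)) := by
  apply AntitoneOn.concaveOn_of_deriv (convex_Ici 1)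
    (G_continuousOn hφmono hφdiff hφpos hφconc hφderiv0 hc)
  · rw [interior_Ici]
    intro v hv
    exact (G_hasDerivAt hφmono hφdiff hφpos hφderiv0 hc hv).differentiableAt.differentiableWithinAt
  · rw [interior_Ici]
    -- antitone derivative, via log trick
    have hder : ∀ v ∈ Ioi (1:ℝ), deriv (fun u => Hinv φ (c + Hfun φ u)) v =
        φ (Hinv φ (c + Hfun φ v)) * (φ v)⁻¹ := fun v hv =>
      (G_hasDerivAt hφmono hφdiff hφpos hφderiv0 hc hv).deriv
    have hLanti : AntitoneOn
        (fun v => Real.log (φ (Hinv φ (c + Hfun φ v))) - Real.log (φ v)) (Ioi 1) := by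
      apply antitoneOn_of_deriv_nonpos (convex_Ioi 1)
      · apply ContinuousOn.sub
        · apply ContinuousOn.log
          · apply ContinuousOn.comp (hφcont hφmono hφdiff hφpos)
              ((G_continuousOn hφmono hφdiff hφpos hφconc hφderiv0 hc).mono
                (Ioi_subset_Ici le_rfl))
            intro v hv
            exact mem_Ici.mpr (G_ge_one hφmono hφdiff hφpos hφderiv0 hc (le_of_lt hv))
          · intro v hv
            exact (hφpos _ (G_ge_one hφmono hφdiff hφpos hφderiv0 hc (le_of_lt hv))).ne'
        · apply ContinuousOn.log ((hφcont hφmono hφdiff hφpos).mono (Ioi_subset_Ici le_rfl))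
          intro v hv
          exact (hφpos v (le_of_lt hv)).ne'
      · rw [interior_Ioi]
        intro v hv
        have hGv1 : 1 ≤ Hinv φ (c + Hfun φ v) :=
          G_ge_one hφmono hφdiff hφpos hφderiv0 hc (le_of_lt hv)
        have hd : HasDerivAt
            (fun v => Real.log (φ (Hinv φ (c + Hfun φ v))) - Real.log (φ v))
            (deriv φ (Hinv φ (c + Hfun φ v)) *
              (φ (Hinv φ (c + Hfun φ v)) * (φ v)⁻¹) / φ (Hinv φ (c + Hfun φ v))
              - deriv φ v / φ v) v := by
          apply HasDerivAt.sub
          · have h1 := (hφdiff _ hGv1).hasDerivAt.comp v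
              (G_hasDerivAt hφmono hφdiff hφpos hφderiv0 hc hv)
            have h2 := (Real.hasDerivAt_log (hφpos _ hGv1).ne').comp v h1
            rw [div_eq_inv_mul]
            exact h2
          · have h1 := (Real.hasDerivAt_log (hφpos v (le_of_lt hv)).ne').comp v
              (hφdiff v (le_of_lt hv)).hasDerivAt
            rw [div_eq_inv_mul]
            exact h1
        exact hd.differentiableAt.differentiableWithinAt
      · rw [interior_Ioi]
        intro v hv
        have hv1 : (1:ℝ) ≤ v := le_of_lt hv
        have hGv1 : 1 ≤ Hinv φ (c + Hfun φ v) :=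
          G_ge_one hφmono hφdiff hφpos hφderiv0 hc hv1
        have hGvv : v ≤ Hinv φ (c + Hfun φ v) :=
          G_ge hφmono hφdiff hφpos hφderiv0 hc hv1
        have hφv : 0 < φ v := hφpos v hv1
        have hφG : 0 < φ (Hinv φ (c + Hfun φ v)) := hφpos _ hGv1
        have hd : HasDerivAt
            (fun v => Real.log (φ (Hinv φ (c + Hfun φ v))) - Real.log (φ v))
            (deriv φ (Hinv φ (c + Hfun φ v)) *
              (φ (Hinv φ (c + Hfun φ v)) * (φ v)⁻¹) / φ (Hinv φ (c + Hfun φ v))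
              - deriv φ v / φ v) v := by
          apply HasDerivAt.sub
          · have h1 := (hφdiff _ hGv1).hasDerivAt.comp v
              (G_hasDerivAt hφmono hφdiff hφpos hφderiv0 hc hv)
            have h2 := (Real.hasDerivAt_log (hφpos _ hGv1).ne').comp v h1
            rw [div_eq_inv_mul]
            exact h2
          · have h1 := (Real.hasDerivAt_log (hφpos v hv1).ne').comp v
              (hφdiff v hv1).hasDerivAt
            rw [div_eq_inv_mul]
            exact h1
        rw [hd.deriv]
        have hanti := hφderiv_anti hφmono hφdiff hφpos hφconc (mem_Ici.mpr hv1)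
          (mem_Ici.mpr hGv1) hGvv
        have heq : deriv φ (Hinv φ (c + Hfun φ v)) *
            (φ (Hinv φ (c + Hfun φ v)) * (φ v)⁻¹) / φ (Hinv φ (c + Hfun φ v))
            = deriv φ (Hinv φ (c + Hfun φ v)) / φ v := by
          field_simp
        rw [heq]
        rw [sub_nonpos, div_le_div_iff_of_pos_right hφv]
        exact hanti
    -- convert: deriv G = exp(L)
    intro v₁ hv₁ v₂ hv₂ h12
    rw [hder v₁ hv₁, hder v₂ hv₂]
    have hL := hLanti hv₁ hv₂ h12
    simp only at hL
    have hG1 : 0 < φ (Hinv φ (c + Hfun φ v₁)) :=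
      hφpos _ (G_ge_one hφmono hφdiff hφpos hφderiv0 hc (le_of_lt hv₁))
    have hG2 : 0 < φ (Hinv φ (c + Hfun φ v₂)) :=
      hφpos _ (G_ge_one hφmono hφdiff hφpos hφderiv0 hc (le_of_lt hv₂))
    have hφ1 : 0 < φ v₁ := hφpos v₁ (le_of_lt hv₁)
    have hφ2 : 0 < φ v₂ := hφpos v₂ (le_of_lt hv₂)
    have h1 : Real.log (φ (Hinv φ (c + Hfun φ v₂)) * (φ v₂)⁻¹)
        ≤ Real.log (φ (Hinv φ (c + Hfun φ v₁)) * (φ v₁)⁻¹) := by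
      rw [Real.log_mul hG2.ne' (by positivity), Real.log_mul hG1.ne' (by positivity),
        Real.log_inv, Real.log_inv]
      linarith
    have := Real.exp_le_exp.mpr h1
    rwa [Real.exp_log (by positivity), Real.exp_log (by positivity)] at this

end Gsec
end ConcSec
end Analytic


/-- Lemma 5.6.  The expectation `E[∑_{n=0}^{T₁} r(n)]`, where `T₁` is the first
hitting time of `C̄ = C × C` by `(X_n, X'_n)`, equals
`∑_{n≥0} r(n) P(T₁ ≥ n) = r(0) + ∑_{m≥0} r(m+1) 1_E(s₀) (tabooIter m)(s₀, univ)`. -/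
theorem statement15 {X : Type*} [MeasurableSpace X]
    (P : ℕ → Kernel X X) (hP : ∀ k, IsMarkovKernel (P k))
    (C : Set X) (hC : MeasurableSet C)
    (V : X → ℝ) (hVmeas : Measurable V) (hV1 : ∀ x, 1 ≤ V x)
    (φ : ℝ → ℝ)
    (hφconc : ConcaveOn ℝ (Set.Ici 1) φ)
    (hφmono : MonotoneOn φ (Set.Ici 1))
    (hφdiff : ∀ t, 1 ≤ t → DifferentiableAt ℝ φ t)
    (hφpos : ∀ t, 1 ≤ t → 0 < φ t)
    (hφderiv0 : Tendsto (deriv φ) atTop (nhds 0))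
    (ν : ℕ → Measure X) (hν : ∀ k, IsProbabilityMeasure (ν k))
    (εν εb : ℝ) (hεν : εν ∈ Set.Ioo (0:ℝ) 1) (hεb : εb ∈ Set.Ioo (0:ℝ) 1)
    (bV cV : ℝ)
    (hVint : ∀ k, 1 ≤ k → ∀ x, Integrable V (P k x))
    (hdrift : ∀ k, 1 ≤ k → ∀ x,
      ∫ y, V y ∂(P k x) ≤ V x - φ (V x) + bV * C.indicator 1 x)
    (hminor : ∀ k, 1 ≤ k → ∀ x ∈ C, ∀ A : Set X, MeasurableSet A →
      ENNReal.ofReal εν * ν k A ≤ P k x A)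
    (hout : ∀ x ∉ C, bV / (1 - εb) ≤ φ (V x))
    (hin : ∀ x ∈ C, V x ≤ cV)
    -- the coupling construction (Definition 5.1); the flag `true` indicates coupling:
    (Pbar : ℕ → Kernel ((X × X) × Bool) ((X × X) × Bool))
    (hPbar : ∀ k, IsMarkovKernel (Pbar k))
    (hbar_in : ∀ k, 1 ≤ k → ∀ x x' : X, x ∈ C → x' ∈ C →
      Pbar k ((x, x'), false) =
        ENNReal.ofReal εν • ((ν k).map fun y => ((y, y), true)) +
        ENNReal.ofReal (1 - εν) •
          (((Qmeas P ν εν k x).prod (Qmeas P ν εν k x')).map fun p => (p, false)))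
    (hbar_out : ∀ k, 1 ≤ k → ∀ x x' : X, ¬(x ∈ C ∧ x' ∈ C) →
      Pbar k ((x, x'), false) =
        (((P k x).prod (P k x')).map fun p => (p, false)))
    (hbar_diag : ∀ k, 1 ≤ k → ∀ x : X,
      Pbar k ((x, x), true) = (P k x).map fun y => ((y, y), true))
    (hbar_ne : ∀ k, 1 ≤ k → ∀ x x' : X, x ≠ x' →
      Pbar k ((x, x'), true) = Measure.dirac ((x, x'), true))
    (E : Set ((X × X) × Bool)) (hE : MeasurableSet E)
    (hEdef : E = {s : (X × X) × Bool | ¬(s.1.1 ∈ C ∧ s.1.2 ∈ C)}) :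
    ∀ x x' : X,
      ENNReal.ofReal (rate φ εb 0) +
        ∑' m : ℕ, ENNReal.ofReal (rate φ εb (m + 1)) *
          (Set.indicator ((C ×ˢ C)ᶜ) (fun _ => (1 : ENNReal)) (x, x') *
            tabooIter Pbar hE m ((x, x'), false) Set.univ) ≤
      ENNReal.ofReal (1 + rate φ εb 1 / (εb * φ 1) * (V x + V x' - 2) *
        Set.indicator ((C ×ˢ C)ᶜ) 1 (x, x')) := by
  
  intro x x'
  have hφ1 : 0 < φ 1 := hφpos 1 le_rfl
  obtain ⟨hεb0, hεb1⟩ := hεb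
  have hrate0 : rate φ εb 0 = 1 := by
    unfold rate
    rw [Nat.cast_zero, mul_zero, Hinv_zero hφmono hφdiff hφpos hφderiv0, div_self hφ1.ne']
  have hrate_nonneg : ∀ n : ℕ, 0 ≤ rate φ εb n := by
    intro n
    have h0 : (0:ℝ) ≤ εb * n := mul_nonneg hεb0.le (Nat.cast_nonneg n)
    have := hφpos _ (Hinv_mem hφmono hφdiff hφpos hφderiv0 h0)
    exact div_nonneg this.le hφ1.le
  by_cases hmem : (x, x') ∈ C ×ˢ C
  · -- (x, x') ∈ C̄ : both indicators vanish
    have hind : Set.indicator ((C ×ˢ C)ᶜ) (fun _ => (1:ENNReal)) (x,x') = 0 :=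
      Set.indicator_of_notMem (by simpa using hmem) _
    have hind2 : Set.indicator ((C ×ˢ C)ᶜ) (1 : X × X → ℝ) (x,x') = 0 :=
      Set.indicator_of_notMem (by simpa using hmem) _
    rw [hind, hind2, hrate0]
    simp
  · -- main case
    subst hEdef
    have hmem' : (x,x') ∈ (C ×ˢ C)ᶜ := by simpa using hmem
    set v₀ : ℝ := V x + V x' - 1 with hv₀_def
    have hv₀1 : 1 ≤ v₀ := by
      have h1 := hV1 x; have h2 := hV1 x'
      rw [hv₀_def]; linarith
    set K : ℝ := 1 / (εb * φ 1) with hK_def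
    have hKpos : 0 < K := by rw [hK_def]; positivity
    set c : ℕ → ℝ := fun m => εb * ((m:ℝ) + 1) with hc_def
    have hc0 : ∀ m, 0 ≤ c m := by
      intro m
      have : (0:ℝ) ≤ (m:ℝ) + 1 := by positivity
      exact mul_nonneg hεb0.le this
    have hcε : ∀ m, εb ≤ c m := by
      intro m
      have h1 : (1:ℝ) ≤ (m:ℝ) + 1 := by
        have : (0:ℝ) ≤ (m:ℝ) := Nat.cast_nonneg m; linarith
      calc εb = εb * 1 := (mul_one εb).symm
        _ ≤ εb * ((m:ℝ) + 1) := mul_le_mul_of_nonneg_left h1 hεb0.le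
    set gq : ℕ → ℝ → ℝ :=
      fun m w => K * (Hinv φ (c m + Hfun φ (max w 1)) - Hinv φ (c m)) with hgq_def
    have hgq_mono : ∀ m, Monotone (gq m) := by
      intro m w₁ w₂ h
      have h1 : 1 ≤ max w₁ 1 := le_max_right _ _
      have h2 := G_mono_v hφmono hφdiff hφpos hφderiv0 (hc0 m) h1 (max_le_max h le_rfl)
      simp only [hgq_def]
      have := hKpos.le
      nlinarith
    have hgq_nonneg : ∀ m w, 0 ≤ gq m w := by
      intro m w
      have h1 : 1 ≤ max w 1 := le_max_right _ _
      have h2 : Hinv φ (c m) ≤ Hinv φ (c m + Hfun φ (max w 1)) := by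
        apply Hinv_mono hφmono hφdiff hφpos hφderiv0 (hc0 m)
        linarith [Hfun_nonneg hφmono hφdiff hφpos h1]
      simp only [hgq_def]
      exact mul_nonneg hKpos.le (by linarith)
    have hgq_meas : ∀ m, Measurable (gq m) := fun m => (hgq_mono m).measurable
    set Vbar : (X × X) × Bool → ℝ := fun s => V s.1.1 + V s.1.2 - 1 with hVbar_def
    have hVbar_meas : Measurable Vbar := by
      apply Measurable.sub
      · exact (hVmeas.comp (measurable_fst.comp measurable_fst)).add
          (hVmeas.comp (measurable_snd.comp measurable_fst))
      · exact measurable_const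
    set Gbar : ℕ → (X × X) × Bool → ENNReal :=
      fun m s => ENNReal.ofReal (gq m (Vbar s)) with hGbar_def
    have hGbar_meas : ∀ m, Measurable (Gbar m) := fun m =>
      ENNReal.measurable_ofReal.comp ((hgq_meas m).comp hVbar_meas)
    set s₀ : (X × X) × Bool := ((x, x'), false) with hs₀_def
    set E₀ : Set ((X × X) × Bool) := ((C ×ˢ C)ᶜ) ×ˢ ({false} : Set Bool) with hE₀_def
    have hE₀meas : MeasurableSet E₀ := ((hC.prod hC).compl).prod (measurableSet_singleton false)
    have hs₀E₀ : s₀ ∈ E₀ := Set.mem_prod.mpr ⟨hmem', rfl⟩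
    have hmapmeas : Measurable (fun p : X × X => (p, false)) :=
      measurable_id.prodMk measurable_const
    -- ===== pointwise one-step estimate =====
    have hstep : ∀ m : ℕ, ∀ s ∈ E₀,
        ENNReal.ofReal (rate φ εb (m+1)) +
          ∫⁻ z, Gbar (m+1) z ∂((Pbar (m+1) s).restrict
            {s : (X × X) × Bool | ¬(s.1.1 ∈ C ∧ s.1.2 ∈ C)}) ≤ Gbar m s := by
      intro m s hs
      obtain ⟨⟨y, y'⟩, b⟩ := s
      rw [hE₀_def, Set.mem_prod] at hs
      obtain ⟨hyC, hb⟩ := hs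
      simp only [Set.mem_singleton_iff] at hb
      subst hb
      have hnC : ¬(y ∈ C ∧ y' ∈ C) := by simpa using hyC
      have hk : 1 ≤ m + 1 := Nat.le_add_left 1 m
      haveI := hP (m+1)
      set v : ℝ := V y + V y' - 1 with hv_def
      have hVy := hV1 y
      have hVy' := hV1 y'
      have hv1 : 1 ≤ v := by rw [hv_def]; linarith
      set μ1 : Measure X := P (m+1) y with hμ1_def
      set μ2 : Measure X := P (m+1) y' with hμ2_def
      haveI : IsProbabilityMeasure μ1 := by rw [hμ1_def]; infer_instance
      haveI : IsProbabilityMeasure μ2 := by rw [hμ2_def]; infer_instance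
      set μp : Measure (X × X) := μ1.prod μ2 with hμp_def
      haveI : IsProbabilityMeasure μp := by rw [hμp_def]; infer_instance
      have hVy_int : Integrable V μ1 := hVint (m+1) hk y
      have hVy'_int : Integrable V μ2 := hVint (m+1) hk y'
      -- integrability of the coordinates
      have hmapfst : μp.map Prod.fst = μ1 := by
        rw [hμp_def, Measure.map_fst_prod]; simp
      have hmapsnd : μp.map Prod.snd = μ2 := by
        rw [hμp_def, Measure.map_snd_prod]; simp
      have hint_fst : Integrable (fun p : X × X => V p.1) μp := by
        have h := (integrable_map_measure (f := Prod.fst) (g := V)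
          (by rw [hmapfst]; exact hVmeas.aestronglyMeasurable)
          measurable_fst.aemeasurable).mp (by rw [hmapfst]; exact hVy_int)
        exact h
      have hint_snd : Integrable (fun p : X × X => V p.2) μp := by
        have h := (integrable_map_measure (f := Prod.snd) (g := V)
          (by rw [hmapsnd]; exact hVmeas.aestronglyMeasurable)
          measurable_snd.aemeasurable).mp (by rw [hmapsnd]; exact hVy'_int)
        exact h
      have hsum_int : Integrable (fun p : X × X => V p.1 + V p.2) μp :=
        hint_fst.add hint_snd
      have hVbar2_int : Integrable (fun p : X × X => V p.1 + V p.2 - 1) μp :=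
        hsum_int.sub (integrable_const 1)
      have hVbar2_meas : Measurable (fun p : X × X => V p.1 + V p.2 - 1) :=
        ((hVmeas.comp measurable_fst).add (hVmeas.comp measurable_snd)).sub measurable_const
      -- value of the mean
      have hw_eq : ∫ p, (V p.1 + V p.2 - 1) ∂μp = (∫ z, V z ∂μ1) + (∫ z, V z ∂μ2) - 1 := by
        rw [integral_sub hsum_int (integrable_const 1),
          integral_add hint_fst hint_snd, integral_const]
        have h1 : ∫ p : X × X, V p.1 ∂μp = ∫ z, V z ∂μ1 := by
          rw [← hmapfst, integral_map measurable_fst.aemeasurable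
            (by rw [hmapfst]; exact hVmeas.aestronglyMeasurable)]
        have h2 : ∫ p : X × X, V p.2 ∂μp = ∫ z, V z ∂μ2 := by
          rw [← hmapsnd, integral_map measurable_snd.aemeasurable
            (by rw [hmapsnd]; exact hVmeas.aestronglyMeasurable)]
        rw [h1, h2]
        simp
      -- the drift estimate
      have hchord : φ v ≤ φ (V y) + φ (V y') := by
        have := φ_chord hφmono hφdiff hφpos hφconc hVy hVy'
        rw [hv_def]
        have : φ (V y + V y' - 1) ≤ φ (V y) + φ (V y') - φ 1 := this
        linarith
      have hdrift1 : ∫ z, V z ∂μ1 ≤ V y - φ (V y) + bV * C.indicator 1 y := hdrift (m+1) hk y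
      have hdrift2 : ∫ z, V z ∂μ2 ≤ V y' - φ (V y') + bV * C.indicator 1 y' := hdrift (m+1) hk y'
      have hind_sum : bV * C.indicator 1 y + bV * C.indicator 1 y'
          ≤ (1 - εb) * (φ (V y) + φ (V y')) := by
        have hφy := hφpos _ hVy
        have hφy' := hφpos _ hVy'
        rcases not_and_or.mp hnC with hy | hy'
        · have hiy : C.indicator (1 : X → ℝ) y = 0 := Set.indicator_of_notMem hy _
          have houty : bV ≤ (1 - εb) * φ (V y) := by
            have h := hout y hy
            rw [div_le_iff₀ (by linarith : (0:ℝ) < 1 - εb)] at h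
            linarith [h]
          rw [hiy, mul_zero, zero_add]
          by_cases hy'C : y' ∈ C
          · rw [Set.indicator_of_mem hy'C, Pi.one_apply, mul_one]
            nlinarith
          · rw [Set.indicator_of_notMem hy'C, mul_zero]
            nlinarith
        · have hiy' : C.indicator (1 : X → ℝ) y' = 0 := Set.indicator_of_notMem hy' _
          have houty' : bV ≤ (1 - εb) * φ (V y') := by
            have h := hout y' hy'
            rw [div_le_iff₀ (by linarith : (0:ℝ) < 1 - εb)] at h
            linarith [h]
          rw [hiy', mul_zero, add_zero]
          by_cases hyC : y ∈ C
          · rw [Set.indicator_of_mem hyC, Pi.one_apply, mul_one]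
            nlinarith
          · rw [Set.indicator_of_notMem hyC, mul_zero]
            nlinarith
      have hw2 : ∫ p, (V p.1 + V p.2 - 1) ∂μp ≤ v - εb * φ v := by
        rw [hw_eq]
        have hchord2 : εb * φ v ≤ εb * (φ (V y) + φ (V y')) :=
          mul_le_mul_of_nonneg_left hchord hεb0.le
        rw [hv_def]
        nlinarith
      have hw1 : 1 ≤ ∫ p, (V p.1 + V p.2 - 1) ∂μp := by
        have h := integral_mono (μ := μp) (integrable_const (1:ℝ)) hVbar2_int
          (fun p => by
            show (1:ℝ) ≤ V p.1 + V p.2 - 1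
            have h1 := hV1 p.1; have h2 := hV1 p.2; linarith)
        rwa [integral_const, probReal_univ, one_smul] at h
      have hδ : 1 ≤ v - εb * φ v := le_trans hw1 hw2
      -- Jensen's inequality
      set g : ℝ → ℝ := fun u => Hinv φ (c (m+1) + Hfun φ u) with hg_def
      have hvp1 : ∀ p : X × X, 1 ≤ V p.1 + V p.2 - 1 := by
        intro p; have := hV1 p.1; have := hV1 p.2; linarith
      have hgcomp : (g ∘ fun p : X × X => V p.1 + V p.2 - 1)
          = fun p => gq (m+1) (V p.1 + V p.2 - 1) * (1 / K) + Hinv φ (c (m+1)) := by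
        funext p
        simp only [Function.comp_apply, hg_def, hgq_def, max_eq_left (hvp1 p)]
        field_simp
        ring
      have hgmax_mono : Monotone (fun w => Hinv φ (c (m+1) + Hfun φ (max w 1))) := by
        intro w₁ w₂ h
        exact G_mono_v hφmono hφdiff hφpos hφderiv0 (hc0 (m+1)) (le_max_right _ _)
          (max_le_max h le_rfl)
      have hA1 : 1 ≤ Hinv φ (c (m+1)) :=
        Hinv_mem hφmono hφdiff hφpos hφderiv0 (hc0 (m+1))
      have hgl : ∀ u, 1 ≤ u → Hinv φ (c (m+1)) ≤ g u := by
        intro u hu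
        rw [hg_def]
        apply Hinv_mono hφmono hφdiff hφpos hφderiv0 (hc0 (m+1))
        linarith [Hfun_nonneg hφmono hφdiff hφpos hu]
      have haff : ∀ u, (1:ℝ) ≤ u → g u ≤ Hinv φ (c (m+1)) +
          (φ (Hinv φ (c (m+1))) / φ 1) * (u - 1) := fun u hu =>
        G_affine_bound hφmono hφdiff hφpos hφconc hφderiv0 (hc0 (m+1)) hu
      have hg_int : Integrable (g ∘ fun p : X × X => V p.1 + V p.2 - 1) μp := by
        apply Integrable.mono' (g := fun p : X × X => Hinv φ (c (m+1)) +
          (φ (Hinv φ (c (m+1))) / φ 1) * ((V p.1 + V p.2 - 1) - 1))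
        · exact (integrable_const _).add ((hVbar2_int.sub (integrable_const 1)).const_mul _)
        · have : (g ∘ fun p : X × X => V p.1 + V p.2 - 1)
              = fun p => (fun w => Hinv φ (c (m+1) + Hfun φ (max w 1))) (V p.1 + V p.2 - 1) := by
            funext p
            simp only [Function.comp_apply, hg_def, max_eq_left (hvp1 p)]
          rw [this]
          exact ((hgmax_mono.measurable).comp hVbar2_meas).aestronglyMeasurable
        · filter_upwards with p
          have h1 := hgl _ (hvp1 p)
          have h2 := haff _ (hvp1 p)
          rw [Function.comp_apply, Real.norm_eq_abs, abs_of_nonneg (by linarith)]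
          exact h2
      have hg_int' : Integrable (fun p : X × X => g (V p.1 + V p.2 - 1)) μp := hg_int
      have hjensen : ∫ p, g (V p.1 + V p.2 - 1) ∂μp ≤ g (∫ p, (V p.1 + V p.2 - 1) ∂μp) := by
        have h := ConcaveOn.le_map_average (μ := μp)
          (f := fun p : X × X => V p.1 + V p.2 - 1) (g := g) (s := Set.Ici 1)
          (G_concaveOn hφmono hφdiff hφpos hφconc hφderiv0 (hc0 (m+1)))
          (G_continuousOn hφmono hφdiff hφpos hφconc hφderiv0 (hc0 (m+1)))
          isClosed_Ici
          (Filter.Eventually.of_forall fun p => Set.mem_Ici.mpr (hvp1 p))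
          hVbar2_int hg_int
        rwa [average_eq_integral, average_eq_integral] at h
      have hchain : g (∫ p, (V p.1 + V p.2 - 1) ∂μp) ≤ Hinv φ (c m + Hfun φ v) := by
        have h1 : g (∫ p, (V p.1 + V p.2 - 1) ∂μp) ≤ g (v - εb * φ v) := by
          rw [hg_def]
          exact G_mono_v hφmono hφdiff hφpos hφderiv0 (hc0 (m+1)) hw1 hw2
        have h2 : g (v - εb * φ v) ≤ Hinv φ ((c (m+1) - εb) + Hfun φ v) := by
          rw [hg_def]
          exact G_shift hφmono hφdiff hφpos hφderiv0 hεb0 (hcε (m+1)) hv1 hδ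
        have h3 : c (m+1) - εb = c m := by
          rw [hc_def]; push_cast; ring
        rw [h3] at h2
        exact le_trans h1 h2
      have hincr : Hinv φ (c m) + εb * φ (Hinv φ (c m)) ≤ Hinv φ (c (m+1)) := by
        have h := Hinv_incr hφmono hφdiff hφpos hφderiv0 (hc0 m) hεb0.le
        have h3 : c m + εb = c (m+1) := by rw [hc_def]; push_cast; ring
        rwa [h3] at h
      have hrate_eq : rate φ εb (m+1) = K * (εb * φ (Hinv φ (c m))) := by
        unfold rate
        rw [hK_def, hc_def]
        push_cast
        field_simp
      -- integrability of gq ∘ V̄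
      have hq_int : Integrable (fun p : X × X => gq (m+1) (V p.1 + V p.2 - 1)) μp := by
        have heq : (fun p : X × X => gq (m+1) (V p.1 + V p.2 - 1))
            = fun p => K * (g (V p.1 + V p.2 - 1) - Hinv φ (c (m+1))) := by
          funext p
          simp only [hgq_def, hg_def, max_eq_left (hvp1 p)]
        rw [heq]
        exact ((hg_int'.sub (integrable_const _)).const_mul K)
      have hint_eq : ∫ p, gq (m+1) (V p.1 + V p.2 - 1) ∂μp
          = K * ((∫ p, g (V p.1 + V p.2 - 1) ∂μp) - Hinv φ (c (m+1))) := by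
        have heq : (fun p : X × X => gq (m+1) (V p.1 + V p.2 - 1))
            = fun p => K * (g (V p.1 + V p.2 - 1) - Hinv φ (c (m+1))) := by
          funext p
          simp only [hgq_def, hg_def, max_eq_left (hvp1 p)]
        rw [heq, integral_const_mul, integral_sub hg_int' (integrable_const _), integral_const]
        simp [measure_univ]
      have hreal : rate φ εb (m+1) + ∫ p, gq (m+1) (V p.1 + V p.2 - 1) ∂μp ≤ gq m v := by
        rw [hint_eq, hrate_eq]
        have hgqv : gq m v = K * (Hinv φ (c m + Hfun φ v) - Hinv φ (c m)) := by
          simp only [hgq_def, max_eq_left hv1]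
        rw [hgqv]
        have hints : ∫ p, g (V p.1 + V p.2 - 1) ∂μp ≤ Hinv φ (c m + Hfun φ v) :=
          le_trans hjensen hchain
        nlinarith [hKpos.le]
      -- ENNReal assembly
      have hker := hbar_out (m+1) hk y y' hnC
      calc ENNReal.ofReal (rate φ εb (m+1)) +
            ∫⁻ z, Gbar (m+1) z ∂((Pbar (m+1) ((y,y'),false)).restrict
              {s : (X × X) × Bool | ¬(s.1.1 ∈ C ∧ s.1.2 ∈ C)})
          ≤ ENNReal.ofReal (rate φ εb (m+1)) +
            ∫⁻ z, Gbar (m+1) z ∂(Pbar (m+1) ((y,y'),false)) := by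
            exact add_le_add_right (lintegral_mono' Measure.restrict_le_self le_rfl) _
        _ = ENNReal.ofReal (rate φ εb (m+1)) +
            ∫⁻ p, Gbar (m+1) (p, false) ∂μp := by
            rw [hker, lintegral_map (hGbar_meas (m+1)) hmapmeas, hμp_def, hμ1_def, hμ2_def]
        _ = ENNReal.ofReal (rate φ εb (m+1)) +
            ENNReal.ofReal (∫ p, gq (m+1) (V p.1 + V p.2 - 1) ∂μp) := by
            rw [← ofReal_integral_eq_lintegral_ofReal hq_int
              (Filter.Eventually.of_forall fun p => hgq_nonneg (m+1) _)]
        _ = ENNReal.ofReal (rate φ εb (m+1) + ∫ p, gq (m+1) (V p.1 + V p.2 - 1) ∂μp) := by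
            rw [ENNReal.ofReal_add (hrate_nonneg _)
              (integral_nonneg (fun p => hgq_nonneg (m+1) _))]
        _ ≤ ENNReal.ofReal (gq m v) := ENNReal.ofReal_le_ofReal hreal
        _ = Gbar m ((y,y'),false) := by rw [hGbar_def]
    -- ===== support of the taboo iterates =====
    have hsupp : ∀ m, tabooIter Pbar hE m s₀ E₀ᶜ = 0 := by
      intro m
      induction m with
      | zero =>
        rw [show tabooIter Pbar hE 0 = Kernel.id from rfl, Kernel.id_apply,
          Measure.dirac_apply' _ hE₀meas.compl]
        exact Set.indicator_of_notMem (Set.notMem_compl_iff.mpr hs₀E₀) _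
      | succ n ih =>
        rw [show tabooIter Pbar hE (n+1)
            = ((Pbar (n+1)).restrict hE).comp (tabooIter Pbar hE n) from rfl,
          Kernel.comp_apply, Measure.bind_apply hE₀meas.compl (Kernel.measurable _).aemeasurable]
        have hae : ∀ᵐ s ∂(tabooIter Pbar hE n s₀), s ∈ E₀ := by
          rw [MeasureTheory.ae_iff]
          exact ih
        apply le_antisymm _ zero_le
        have hzero : ∀ᵐ s ∂(tabooIter Pbar hE n s₀),
            (((Pbar (n+1)).restrict hE) s) E₀ᶜ = 0 := by
          filter_upwards [hae] with s hs
          obtain ⟨⟨y, y'⟩, b⟩ := s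
          rw [hE₀_def, Set.mem_prod] at hs
          obtain ⟨hyC, hb⟩ := hs
          simp only [Set.mem_singleton_iff] at hb
          subst hb
          have hnC : ¬(y ∈ C ∧ y' ∈ C) := by simpa using hyC
          rw [Kernel.restrict_apply, Measure.restrict_apply hE₀meas.compl,
            hbar_out (n+1) (Nat.le_add_left 1 n) y y' hnC,
            Measure.map_apply hmapmeas (hE₀meas.compl.inter hE)]
          convert measure_empty
          · ext p
            simp only [Set.mem_preimage, Set.mem_inter_iff, Set.mem_compl_iff,
              Set.mem_empty_iff_false, iff_false]
            intro hp
            obtain ⟨hp1, hp2⟩ := hp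
            apply hp1
            rw [hE₀_def, Set.mem_prod]
            refine ⟨?_, rfl⟩
            simpa using hp2
          · infer_instance
        calc ∫⁻ s, (((Pbar (n+1)).restrict hE) s) E₀ᶜ ∂(tabooIter Pbar hE n s₀)
            ≤ ∫⁻ _, 0 ∂(tabooIter Pbar hE n s₀) := by
              apply lintegral_mono_ae
              filter_upwards [hzero] with s hs
              rw [hs]
          _ = 0 := lintegral_zero
    -- ===== the invariant =====
    have hinvariant : ∀ N : ℕ,
        (∑ m ∈ Finset.range N, ENNReal.ofReal (rate φ εb (m+1)) *
          tabooIter Pbar hE m s₀ Set.univ) + ∫⁻ z, Gbar N z ∂(tabooIter Pbar hE N s₀)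
          ≤ Gbar 0 s₀ := by
      intro N
      induction N with
      | zero =>
        simp only [Finset.range_zero, Finset.sum_empty, zero_add]
        rw [show tabooIter Pbar hE 0 = Kernel.id from rfl, Kernel.id_apply,
          lintegral_dirac' _ (hGbar_meas 0)]
      | succ N ih =>
        have hcomp : ∫⁻ z, Gbar (N+1) z ∂(tabooIter Pbar hE (N+1) s₀)
            = ∫⁻ s, ∫⁻ z, Gbar (N+1) z ∂(((Pbar (N+1)).restrict hE) s)
              ∂(tabooIter Pbar hE N s₀) := by
          rw [show tabooIter Pbar hE (N+1)
              = ((Pbar (N+1)).restrict hE).comp (tabooIter Pbar hE N) from rfl]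
          exact Kernel.lintegral_comp _ _ _ (hGbar_meas (N+1))
        have hae : ∀ᵐ s ∂(tabooIter Pbar hE N s₀), s ∈ E₀ := by
          rw [MeasureTheory.ae_iff]
          exact hsupp N
        have hmono : ∫⁻ s, (ENNReal.ofReal (rate φ εb (N+1)) +
            ∫⁻ z, Gbar (N+1) z ∂(((Pbar (N+1)).restrict hE) s)) ∂(tabooIter Pbar hE N s₀)
            ≤ ∫⁻ s, Gbar N s ∂(tabooIter Pbar hE N s₀) := by
          apply lintegral_mono_ae
          filter_upwards [hae] with s hs
          have h := hstep N s hs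
          rwa [← Kernel.restrict_apply (Pbar (N+1)) hE s] at h
        rw [lintegral_add_left measurable_const, lintegral_const] at hmono
        rw [Finset.sum_range_succ, hcomp, add_assoc]
        calc (∑ m ∈ Finset.range N, ENNReal.ofReal (rate φ εb (m+1)) *
              tabooIter Pbar hE m s₀ Set.univ) +
              (ENNReal.ofReal (rate φ εb (N+1)) * tabooIter Pbar hE N s₀ Set.univ +
                ∫⁻ s, ∫⁻ z, Gbar (N+1) z ∂(((Pbar (N+1)).restrict hE) s)
                  ∂(tabooIter Pbar hE N s₀))
            ≤ (∑ m ∈ Finset.range N, ENNReal.ofReal (rate φ εb (m+1)) *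
              tabooIter Pbar hE m s₀ Set.univ) +
                ∫⁻ s, Gbar N s ∂(tabooIter Pbar hE N s₀) := add_le_add_right hmono _
          _ ≤ Gbar 0 s₀ := ih
    -- ===== summing up =====
    have hsum_le : (∑' m : ℕ, ENNReal.ofReal (rate φ εb (m+1)) *
        tabooIter Pbar hE m s₀ Set.univ) ≤ Gbar 0 s₀ := by
      rw [ENNReal.tsum_eq_iSup_sum]
      apply iSup_le
      intro F
      calc ∑ m ∈ F, ENNReal.ofReal (rate φ εb (m+1)) * tabooIter Pbar hE m s₀ Set.univ
          ≤ ∑ m ∈ Finset.range (F.sup id + 1),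
              ENNReal.ofReal (rate φ εb (m+1)) * tabooIter Pbar hE m s₀ Set.univ := by
            apply Finset.sum_le_sum_of_subset
            intro m hm
            exact Finset.mem_range.mpr (Nat.lt_succ_of_le (Finset.le_sup (f := id) hm))
        _ ≤ Gbar 0 s₀ := le_trans (self_le_add_right _ _) (hinvariant _)
    have hG0 : Gbar 0 s₀ ≤ ENNReal.ofReal
        (rate φ εb 1 / (εb * φ 1) * (V x + V x' - 2)) := by
      rw [hGbar_def]
      apply ENNReal.ofReal_le_ofReal
      have hVs₀ : Vbar s₀ = v₀ := by rw [hVbar_def, hs₀_def, hv₀_def]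
      have haff := G_affine_bound hφmono hφdiff hφpos hφconc hφderiv0 (hc0 0) hv₀1
      have hr1 : rate φ εb 1 = φ (Hinv φ (c 0)) / φ 1 := by
        unfold rate
        rw [hc_def]
        norm_num
      simp only [hgq_def, hVs₀, max_eq_left hv₀1]
      rw [hr1, hK_def, hv₀_def]
      have h2 : Hinv φ (c 0 + Hfun φ v₀) - Hinv φ (c 0)
          ≤ (φ (Hinv φ (c 0)) / φ 1) * (v₀ - 1) := by linarith [haff]
      have h3 : (0:ℝ) < εb * φ 1 := by positivity
      rw [hv₀_def] at h2
      calc 1 / (εb * φ 1) * (Hinv φ (c 0 + Hfun φ (V x + V x' - 1)) - Hinv φ (c 0))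
          ≤ 1 / (εb * φ 1) * ((φ (Hinv φ (c 0)) / φ 1) * (V x + V x' - 1 - 1)) := by
            apply mul_le_mul_of_nonneg_left h2
            positivity
        _ = φ (Hinv φ (c 0)) / φ 1 / (εb * φ 1) * (V x + V x' - 2) := by ring
    -- ===== final assembly =====
    have hindE : Set.indicator ((C ×ˢ C)ᶜ) (fun _ => (1:ENNReal)) (x,x') = 1 :=
      Set.indicator_of_mem hmem' _
    have hind2 : Set.indicator ((C ×ˢ C)ᶜ) (1 : X × X → ℝ) (x,x') = 1 :=
      Set.indicator_of_mem hmem' _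
    rw [hindE, hind2, hrate0, mul_one]
    simp only [one_mul]
    have hfinal : (∑' m : ℕ, ENNReal.ofReal (rate φ εb (m+1)) *
        tabooIter Pbar hE m ((x,x'),false) Set.univ)
        ≤ ENNReal.ofReal (rate φ εb 1 / (εb * φ 1) * (V x + V x' - 2)) :=
      le_trans hsum_le hG0
    have hnn : 0 ≤ rate φ εb 1 / (εb * φ 1) * (V x + V x' - 2) := by
      apply mul_nonneg
      · apply div_nonneg (hrate_nonneg 1)
        positivity
      · linarith
    calc ENNReal.ofReal 1 + ∑' m : ℕ, ENNReal.ofReal (rate φ εb (m+1)) *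
          tabooIter Pbar hE m ((x,x'),false) Set.univ
        ≤ ENNReal.ofReal 1 +
          ENNReal.ofReal (rate φ εb 1 / (εb * φ 1) * (V x + V x' - 2)) :=
          add_le_add_right hfinal _
      _ = ENNReal.ofReal (1 + rate φ εb 1 / (εb * φ 1) * (V x + V x' - 2)) :=
          (ENNReal.ofReal_add (by norm_num) hnn).symm
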